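/- Let a ≥ b > 0 be integers and let d = ⟨d₁,…,dₙ⟩ be a nonincreasing sequence of integers with a ≥ d₁ and dₙ ≥ b. If Σdᵢ is even and n ≥ (a+b+1)²/(4b), then d is graphic. -/

import Mathlib

open Finset

section Graph
variable {V : Type*} [Fintype V] [DecidableEq V]

/-- Add an edge between two distinct vertices. -/
def addE (G : SimpleGraph V) (x y : V) (hxy : x ≠ y) : SimpleGraph V where
  Adj a b := G.Adj a b ∨ (a = x ∧ b = y) ∨ (a = y ∧ b = x)
  symm := by
    refine ⟨fun a b h => ?_⟩
    rcases h with h | ⟨rfl, rfl⟩ | ⟨rfl, rfl⟩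
    · exact Or.inl h.symm
    · exact Or.inr (Or.inr ⟨rfl, rfl⟩)
    · exact Or.inr (Or.inl ⟨rfl, rfl⟩)
  loopless := by
    refine ⟨fun a h => ?_⟩
    rcases h with h | ⟨rfl, rfl⟩ | ⟨rfl, rfl⟩
    · exact G.loopless.irrefl a h
    · exact hxy rfl
    · exact hxy rfl

instance addE.instDec (G : SimpleGraph V) [DecidableRel G.Adj] (x y : V) (hxy : x ≠ y) :
    DecidableRel (addE G x y hxy).Adj := fun a b =>
  inferInstanceAs (Decidable (G.Adj a b ∨ (a = x ∧ b = y) ∨ (a = y ∧ b = x)))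

lemma degree_addE (G : SimpleGraph V) [DecidableRel G.Adj] {x y : V} (hxy : x ≠ y)
    (hna : ¬ G.Adj x y) (v : V) :
    (addE G x y hxy).degree v = G.degree v + (if v = x ∨ v = y then 1 else 0) := by
  classical
  have hnf : ∀ v, (addE G x y hxy).neighborFinset v =
      if v = x then insert y (G.neighborFinset v)
      else if v = y then insert x (G.neighborFinset v) else G.neighborFinset v := by
    intro v
    ext w
    rw [SimpleGraph.mem_neighborFinset]
    by_cases h1 : v = x <;> by_cases h2 : v = y <;>
      simp_all [addE, SimpleGraph.mem_neighborFinset, SimpleGraph.Adj] <;> tauto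
  rw [SimpleGraph.degree, SimpleGraph.degree, hnf]
  by_cases h1 : v = x
  · subst h1
    simp [hxy, Finset.card_insert_of_notMem, SimpleGraph.mem_neighborFinset, hna]
  · by_cases h2 : v = y
    · subst h2
      have : ¬ G.Adj v x := fun h => hna (h.symm)
      simp [h1, Finset.card_insert_of_notMem, SimpleGraph.mem_neighborFinset, this]
    · simp [h1, h2]

/-- Delete an edge. -/
def delE (G : SimpleGraph V) (x y : V) : SimpleGraph V where
  Adj a b := G.Adj a b ∧ ¬(a = x ∧ b = y) ∧ ¬(a = y ∧ b = x)
  symm := by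
    refine ⟨fun a b h => ?_⟩
    exact ⟨h.1.symm, fun hc => h.2.2 ⟨hc.2, hc.1⟩, fun hc => h.2.1 ⟨hc.2, hc.1⟩⟩
  loopless := by
    refine ⟨fun a h => ?_⟩
    exact G.loopless.irrefl a h.1

instance delE.instDec (G : SimpleGraph V) [DecidableRel G.Adj] (x y : V) :
    DecidableRel (delE G x y).Adj := fun a b =>
  inferInstanceAs (Decidable (_ ∧ _))

lemma degree_delE (G : SimpleGraph V) [DecidableRel G.Adj] {x y : V}
    (ha : G.Adj x y) (v : V) :
    (delE G x y).degree v + (if v = x ∨ v = y then 1 else 0) = G.degree v := by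
  classical
  have hxy : x ≠ y := ha.ne
  have hnf : ∀ v, (delE G x y).neighborFinset v =
      if v = x then (G.neighborFinset v).erase y
      else if v = y then (G.neighborFinset v).erase x else G.neighborFinset v := by
    intro v
    ext w
    rw [SimpleGraph.mem_neighborFinset]
    by_cases h1 : v = x <;> by_cases h2 : v = y <;>
      simp_all [delE, SimpleGraph.mem_neighborFinset, SimpleGraph.Adj] <;> tauto
  rw [SimpleGraph.degree, SimpleGraph.degree, hnf]
  by_cases h1 : v = x
  · subst h1
    have : y ∈ G.neighborFinset v := (SimpleGraph.mem_neighborFinset _ _ _).2 ha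
    simp [hxy, Finset.card_erase_of_mem this]
    have : 1 ≤ G.degree v := by
      rw [SimpleGraph.degree]; exact Finset.card_pos.2 ⟨y, this⟩
    omega
  · by_cases h2 : v = y
    · subst h2
      have hx : x ∈ G.neighborFinset v := (SimpleGraph.mem_neighborFinset _ _ _).2 ha.symm
      simp [h1, Finset.card_erase_of_mem hx]
      have : 1 ≤ G.degree v := by
        rw [SimpleGraph.degree]; exact Finset.card_pos.2 ⟨x, hx⟩
      omega
    · simp [h1, h2]

end Graph


section Graph2
variable {V : Type*} [Fintype V] [DecidableEq V]

/-- Surgery: given an edge `uw`, non-edges `pw` and `qu`, with `p,q,w,u` pairwise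
distinct, there is a graph whose degrees are the old ones, bumped by one at `p` and `q`. -/
lemma swap_surgery (G : SimpleGraph V) [DecidableRel G.Adj] {p q w u : V}
    (hpq : p ≠ q) (hpw : p ≠ w) (hpu : p ≠ u) (hqw : q ≠ w) (hqu : q ≠ u) (hwu : w ≠ u)
    (huw : G.Adj u w) (hnpw : ¬ G.Adj p w) (hnqu : ¬ G.Adj q u) :
    ∃ (G' : SimpleGraph V) (_ : DecidableRel G'.Adj),
      ∀ v, G'.degree v = G.degree v + (if v = p ∨ v = q then 1 else 0) := by
  classical
  let G1 := delE G u w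
  letI : DecidableRel G1.Adj := delE.instDec G u w
  have h1 : ∀ v, G1.degree v + (if v = u ∨ v = w then 1 else 0) = G.degree v :=
    degree_delE G huw
  have hn1 : ¬ G1.Adj p w := fun h => hnpw h.1
  let G2 := addE G1 p w hpw
  letI : DecidableRel G2.Adj := addE.instDec G1 p w hpw
  have h2 : ∀ v, G2.degree v = G1.degree v + (if v = p ∨ v = w then 1 else 0) :=
    degree_addE G1 hpw hn1
  have hn2 : ¬ G2.Adj q u := by
    intro h
    rcases h with h | ⟨h, h'⟩ | ⟨h, h'⟩
    · exact hnqu h.1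
    · exact hpq h.symm
    · exact hpu h'.symm
  let G3 := addE G2 q u hqu
  letI : DecidableRel G3.Adj := addE.instDec G2 q u hqu
  refine ⟨G3, inferInstance, fun v => ?_⟩
  have h3 : ∀ v, G3.degree v = G2.degree v + (if v = q ∨ v = u then 1 else 0) :=
    degree_addE G2 hqu hn2
  have e1 := h1 v
  have e2 := h2 v
  have e3 := h3 v
  by_cases hvp : v = p <;> by_cases hvq : v = q <;> by_cases hvw : v = w <;>
    by_cases hvu : v = u <;> simp_all <;> omega

end Graph2


def EG (d : ℕ → ℕ) (n k : ℕ) : Prop :=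
  ∑ i ∈ range k, d i ≤ k * (k - 1) + ∑ i ∈ Ico k n, min (d i) k

lemma min_mul_min {x k K : ℕ} (hkK : k ≤ K) : k * min x K ≤ K * min x k := by
  rcases le_total x k with h | h
  · rw [min_eq_left (h.trans hkK), min_eq_left h]
    exact Nat.mul_le_mul_right x hkK
  · rw [min_eq_right h]
    calc k * min x K ≤ k * K := Nat.mul_le_mul_left _ (min_le_right _ _)
      _ = K * k := mul_comm _ _

section Preserve

variable {d d' : ℕ → ℕ} {n p q : ℕ}

lemma eg_preserved (hd : Antitone d) (hz : ∀ i, n ≤ i → d i = 0)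
    (hpq : p < q) (hqn : q < n)
    (htop : ∀ i ≤ p, d i = d 0)
    (hqpos : 1 ≤ d q)
    (htail : ∀ i, q < i → d i = 0)
    (heg : ∀ k ≤ n, EG d n k)
    (heven : Even (∑ i ∈ range n, d i))
    (hd' : ∀ i, d' i = if i = p ∨ i = q then d i - 1 else d i)
    {k : ℕ} (hk : k ≤ n) : EG d' n k := by
  have hppos : 1 ≤ d p := le_trans hqpos (hd hpq.le)
  have hDq : d q ≤ d 0 := hd (Nat.zero_le q)
  have hp0 : d p = d 0 := htop p le_rfl
  rcases Nat.eq_zero_or_pos k with rfl | hk1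
  · simp [EG]
  unfold EG
  -- the "indicator" identity
  have hsplit : ∀ i, d i = d' i + ((if i = p then 1 else 0) + (if i = q then 1 else 0)) := by
    intro i
    rw [hd' i]
    by_cases h1 : i = p <;> by_cases h2 : i = q <;> simp [h1, h2, hpq.ne, hpq.ne'] <;> omega
  rcases lt_or_ge q k with hcase1 | hcase2
  -- Case 1 : q < k
  · have hLrel : ∑ i ∈ range k, d i = (∑ i ∈ range k, d' i) + 2 := by
      calc ∑ i ∈ range k, d i
          = ∑ i ∈ range k, (d' i + ((if i = p then 1 else 0) + (if i = q then 1 else 0))) :=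
            sum_congr rfl (fun i _ => hsplit i)
        _ = (∑ i ∈ range k, d' i) + ((∑ i ∈ range k, if i = p then 1 else 0)
              + (∑ i ∈ range k, if i = q then 1 else 0)) := by
            rw [sum_add_distrib, sum_add_distrib]
        _ = (∑ i ∈ range k, d' i) + 2 := by
            rw [Finset.sum_ite_eq' (range k) p (fun _ => 1),
              Finset.sum_ite_eq' (range k) q (fun _ => 1)]
            simp [mem_range, hcase1, lt_trans hpq hcase1]
    have hSrel : ∑ i ∈ Ico k n, min (d' i) k = ∑ i ∈ Ico k n, min (d i) k := by
      refine sum_congr rfl (fun i hi => ?_)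
      simp only [mem_Ico] at hi
      rw [hd' i]
      have : ¬ (i = p ∨ i = q) := by omega
      simp [this]
    have := heg k hk
    unfold EG at this
    omega
  rcases lt_or_ge p k with hcase2p | hcase3
  -- Case 2 : p < k ≤ q
  · have hLrel : ∑ i ∈ range k, d i = (∑ i ∈ range k, d' i) + 1 := by
      calc ∑ i ∈ range k, d i
          = ∑ i ∈ range k, (d' i + ((if i = p then 1 else 0) + (if i = q then 1 else 0))) :=
            sum_congr rfl (fun i _ => hsplit i)
        _ = (∑ i ∈ range k, d' i) + ((∑ i ∈ range k, if i = p then 1 else 0)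
              + (∑ i ∈ range k, if i = q then 1 else 0)) := by
            rw [sum_add_distrib, sum_add_distrib]
        _ = (∑ i ∈ range k, d' i) + 1 := by
            rw [Finset.sum_ite_eq' (range k) p (fun _ => 1),
              Finset.sum_ite_eq' (range k) q (fun _ => 1)]
            simp [mem_range, hcase2p, Nat.not_lt.2 hcase2]
    have hSrel : ∑ i ∈ Ico k n, min (d i) k
        ≤ (∑ i ∈ Ico k n, min (d' i) k) + 1 := by
      have hpt : ∀ i ∈ Ico k n, min (d i) k ≤ min (d' i) k + (if i = q then 1 else 0) := by
        intro i hi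
        simp only [mem_Ico] at hi
        rw [hd' i]
        have hip : i ≠ p := by omega
        by_cases h2 : i = q <;> simp [hip, h2] <;> omega
      calc ∑ i ∈ Ico k n, min (d i) k
          ≤ ∑ i ∈ Ico k n, (min (d' i) k + (if i = q then 1 else 0)) := sum_le_sum hpt
        _ = (∑ i ∈ Ico k n, min (d' i) k) + (∑ i ∈ Ico k n, if i = q then 1 else 0) :=
            sum_add_distrib
        _ = (∑ i ∈ Ico k n, min (d' i) k) + 1 := by
            rw [Finset.sum_ite_eq' (Ico k n) q (fun _ => 1)]
            simp [mem_Ico, hcase2, hqn]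
    have := heg k hk
    unfold EG at this
    omega
  -- Case 3 : k ≤ p
  · have hLrel : ∑ i ∈ range k, d' i = ∑ i ∈ range k, d i := by
      refine sum_congr rfl (fun i hi => ?_)
      simp only [mem_range] at hi
      rw [hd' i]
      have : ¬ (i = p ∨ i = q) := by omega
      simp [this]
    have hLval : ∑ i ∈ range k, d i = k * d 0 := by
      rw [sum_congr rfl (fun i hi => htop i (by simp only [mem_range] at hi; omega))]
      simp [mul_comm]
    rcases lt_or_ge k (d q) with hcq | hcq
    -- Case 3b : k < d q : nothing changes
    · have hSrel : ∑ i ∈ Ico k n, min (d' i) k = ∑ i ∈ Ico k n, min (d i) k := by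
        refine sum_congr rfl (fun i hi => ?_)
        rw [hd' i]
        by_cases h1 : i = p
        · simp [h1, hpq.ne]
          omega
        · by_cases h2 : i = q
          · simp [h1, h2]
            omega
          · simp [h1, h2]
      have := heg k hk
      unfold EG at this
      omega
    rcases lt_or_ge k (d 0) with hcD | hcD
    -- Case 3c : d q ≤ k < d 0
    · have hSrel : ∑ i ∈ Ico k n, min (d i) k
          ≤ (∑ i ∈ Ico k n, min (d' i) k) + 1 := by
        have hpt : ∀ i ∈ Ico k n, min (d i) k ≤ min (d' i) k + (if i = q then 1 else 0) := by
          intro i hi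
          rw [hd' i]
          by_cases h1 : i = p
          · have hip : d i = d 0 := htop i (by omega)
            simp [h1, hpq.ne]
            omega
          · by_cases h2 : i = q <;> simp [h1, h2] <;> omega
        calc ∑ i ∈ Ico k n, min (d i) k
            ≤ ∑ i ∈ Ico k n, (min (d' i) k + (if i = q then 1 else 0)) := sum_le_sum hpt
          _ = (∑ i ∈ Ico k n, min (d' i) k) + (∑ i ∈ Ico k n, if i = q then 1 else 0) :=
              sum_add_distrib
          _ = (∑ i ∈ Ico k n, min (d' i) k) + 1 := by
              rw [Finset.sum_ite_eq' (Ico k n) q (fun _ => 1)]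
              simp [mem_Ico, hqn, le_trans hcase3 hpq.le]
      -- key inequality : k * d 0 + 1 ≤ k * (k-1) + S
      have hs1 : ∑ i ∈ Ico k (p+1), min (d i) k = (p + 1 - k) * k := by
        have hc : ∀ i ∈ Ico k (p+1), min (d i) k = k := by
          intro i hi
          simp only [mem_Ico] at hi
          rw [htop i (by omega)]
          exact min_eq_right (by omega)
        rw [sum_congr rfl hc]
        simp [Nat.card_Ico]
      have hIcosplit : (∑ i ∈ Ico k (p+1), min (d i) k) + (∑ i ∈ Ico (p+1) n, min (d i) k)
          = ∑ i ∈ Ico k n, min (d i) k :=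
        sum_Ico_consecutive _ (by omega) (by omega)
      have harith : k * (k - 1) + (p + 1 - k) * k = k * p := by
        zify [hk1, (by omega : k ≤ p + 1)]
        ring
      set T := ∑ i ∈ Ico (p+1) n, min (d i) k with hT
      have hqmem : q ∈ Ico (p+1) n := by simp [mem_Ico]; omega
      have key : k * d 0 + 1 ≤ k * p + T := by
        rcases le_or_gt (d 0) p with hDp | hDp
        · -- easy: d 0 ≤ p
          have hTq : d q ≤ T := by
            have := single_le_sum (f := fun i => min (d i) k) (fun i _ => Nat.zero_le _) hqmem
            simpa [min_eq_left hcq] using this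
          have : k * d 0 ≤ k * p := Nat.mul_le_mul_left k hDp
          omega
        · -- hard: d 0 ≥ p + 1, use EG (p+1)
          have hegp := heg (p+1) (by omega)
          unfold EG at hegp
          have hLp : ∑ i ∈ range (p+1), d i = (p+1) * d 0 := by
            rw [sum_congr rfl (fun i hi => htop i (by simp only [mem_range] at hi; omega))]
            simp [mul_comm]
          set U := ∑ i ∈ Ico (p+1) n, min (d i) (p+1) with hU
          have hegp' : (p+1) * d 0 ≤ (p+1) * p + U := by
            rw [hLp] at hegp
            simpa using hegp
          have hptw : ∀ i ∈ Ico (p+1) n,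
              k * min (d i) (p+1) + (if i = q then 1 else 0) ≤ (p+1) * min (d i) k := by
            intro i hi
            by_cases h2 : i = q
            · subst h2
              rw [min_eq_left (by omega), min_eq_left hcq, if_pos rfl]
              have h' : (k+1) * d i ≤ (p+1) * d i := Nat.mul_le_mul_right _ (by omega)
              have hexp : (k+1) * d i = k * d i + d i := by ring
              omega
            · simp only [if_neg h2, add_zero]
              exact min_mul_min (by omega)
          have hTU : k * U + 1 ≤ (p+1) * T := by
            calc k * U + 1
                = (∑ i ∈ Ico (p+1) n, k * min (d i) (p+1))
                  + (∑ i ∈ Ico (p+1) n, if i = q then 1 else 0) := by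
                  rw [hU, mul_sum, Finset.sum_ite_eq' (Ico (p+1) n) q (fun _ => 1),
                    if_pos hqmem]
              _ = ∑ i ∈ Ico (p+1) n, (k * min (d i) (p+1) + (if i = q then 1 else 0)) :=
                  sum_add_distrib.symm
              _ ≤ ∑ i ∈ Ico (p+1) n, (p+1) * min (d i) k := sum_le_sum hptw
              _ = (p+1) * T := by rw [hT, mul_sum]
          have e1 : k * (d 0 - p) + k * p = k * d 0 := by
            rw [← Nat.mul_add, Nat.sub_add_cancel (by omega : p ≤ d 0)]
          have e2 : (p+1) * (d 0 - p) + (p+1) * p = (p+1) * d 0 := by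
            rw [← Nat.mul_add, Nat.sub_add_cancel (by omega : p ≤ d 0)]
          have h4 : k * ((p+1) * (d 0 - p)) ≤ k * U :=
            Nat.mul_le_mul_left k (by omega)
          have e3 : (p+1) * (k * (d 0 - p)) = k * ((p+1) * (d 0 - p)) := by ring
          have h5 : (p+1) * (k * (d 0 - p)) < (p+1) * T := by omega
          have h6 : k * (d 0 - p) < T := Nat.lt_of_mul_lt_mul_left h5
          omega
      have := heg k hk
      unfold EG at this
      omega
    -- Case 3a : d 0 ≤ k
    · have hSrel : ∑ i ∈ Ico k n, min (d i) k
          ≤ (∑ i ∈ Ico k n, min (d' i) k) + 2 := by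
        have hpt : ∀ i ∈ Ico k n, min (d i) k
            ≤ min (d' i) k + ((if i = p then 1 else 0) + (if i = q then 1 else 0)) := by
          intro i hi
          rw [hd' i]
          by_cases h1 : i = p <;> by_cases h2 : i = q <;>
            simp [h1, h2, hpq.ne, hpq.ne'] <;> omega
        have hpmem : p ∈ Ico k n := by simp [mem_Ico]; omega
        have hqmem : q ∈ Ico k n := by simp [mem_Ico]; omega
        calc ∑ i ∈ Ico k n, min (d i) k
            ≤ ∑ i ∈ Ico k n, (min (d' i) k
                + ((if i = p then 1 else 0) + (if i = q then 1 else 0))) := sum_le_sum hpt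
          _ = (∑ i ∈ Ico k n, min (d' i) k)
                + ((∑ i ∈ Ico k n, if i = p then 1 else 0)
                  + (∑ i ∈ Ico k n, if i = q then 1 else 0)) := by
              rw [sum_add_distrib, sum_add_distrib]
          _ = (∑ i ∈ Ico k n, min (d' i) k) + 2 := by
              rw [Finset.sum_ite_eq' (Ico k n) p (fun _ => 1),
                Finset.sum_ite_eq' (Ico k n) q (fun _ => 1), if_pos hpmem, if_pos hqmem]
      -- key : k * d 0 + 2 ≤ k * (k-1) + S
      have hSd : ∑ i ∈ Ico k n, min (d i) k = ∑ i ∈ Ico k n, d i := by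
        refine sum_congr rfl (fun i hi => ?_)
        exact min_eq_left (le_trans (hd (Nat.zero_le i)) hcD)
      have hs1 : ∑ i ∈ Ico k (p+1), d i = (p + 1 - k) * d 0 := by
        rw [sum_congr rfl (fun i hi => htop i (by simp only [mem_Ico] at hi; omega))]
        simp [Nat.card_Ico]
      have hs2 : (q - p) * d q ≤ ∑ i ∈ Ico (p+1) (q+1), d i := by
        have hc : ∑ _i ∈ Ico (p+1) (q+1), d q = (q - p) * d q := by
          rw [sum_const, Nat.card_Ico, smul_eq_mul]
          congr 1
          omega
        rw [← hc]
        exact sum_le_sum (fun i hi => hd (by simp only [mem_Ico] at hi; omega))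
      have hs3 : ∑ i ∈ Ico (q+1) n, d i = 0 := by
        refine sum_eq_zero (fun i hi => htail i (by simp only [mem_Ico] at hi; omega))
      have hsp1 : (∑ i ∈ Ico k (p+1), d i) + (∑ i ∈ Ico (p+1) n, d i)
          = ∑ i ∈ Ico k n, d i := sum_Ico_consecutive _ (by omega) (by omega)
      have hsp2 : (∑ i ∈ Ico (p+1) (q+1), d i) + (∑ i ∈ Ico (q+1) n, d i)
          = ∑ i ∈ Ico (p+1) n, d i := sum_Ico_consecutive _ (by omega) (by omega)
      have key : k * d 0 + 2 ≤ k * (k-1) + ∑ i ∈ Ico k n, min (d i) k := by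
        rw [hSd]
        rcases lt_or_ge (d 0) k with hDk | hDk
        -- k ≥ d 0 + 1
        · have h1 : k * d 0 ≤ k * (k - 1) := Nat.mul_le_mul_left k (by omega)
          have h2 : 1 * d 0 ≤ (p + 1 - k) * d 0 := Nat.mul_le_mul_right _ (by omega)
          have h3 : 1 * d q ≤ (q - p) * d q := Nat.mul_le_mul_right _ (by omega)
          have e1 : 1 * d 0 = d 0 := one_mul _
          have e2 : 1 * d q = d q := one_mul _
          omega
        -- k = d 0
        · have hkD : k = d 0 := by omega
          have e : k * (k - 1) + k = k * k := by zify [hk1]; ring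
          have ee : k * d 0 = k * k := by rw [hkD]
          rcases le_or_gt 2 (p + 1 - k) with hA | hA
          · have h2 : 2 * d 0 ≤ (p + 1 - k) * d 0 := Nat.mul_le_mul_right _ hA
            have h3 : 1 * d q ≤ (q - p) * d q := Nat.mul_le_mul_right _ (by omega)
            have e2 : 2 * d 0 = d 0 + d 0 := by ring
            have e3 : 1 * d q = d q := one_mul _
            omega
          · rcases le_or_gt 2 (q - p) with hB | hB
            · have h2 : 1 * d 0 ≤ (p + 1 - k) * d 0 := Nat.mul_le_mul_right _ (by omega)
              have h3 : 2 * d q ≤ (q - p) * d q := Nat.mul_le_mul_right _ hB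
              have e2 : 1 * d 0 = d 0 := one_mul _
              have e3 : 2 * d q = d q + d q := by ring
              omega
            -- p + 1 - k = 1 and q - p = 1 : parity argument
            · have hpk : p = k := by omega
              have hqp : q = p + 1 := by omega
              have hmid : ∑ i ∈ Ico (p+1) (q+1), d i = d q := by
                subst hqp
                rw [show Ico (p+1) (p+1+1) = {p+1} from by
                  ext x; simp only [mem_Ico, mem_singleton]; omega]
                simp
              have hNsplit : (∑ i ∈ range k, d i) + (∑ i ∈ Ico k n, d i)
                  = ∑ i ∈ range n, d i := by
                rw [range_eq_Ico, range_eq_Ico]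
                exact sum_Ico_consecutive (f := d) (by omega) (by omega)
              have hone : p + 1 - k = 1 := by omega
              rw [hone, one_mul] at hs1
              have hNval : ∑ i ∈ range n, d i = d 0 * (d 0 + 1) + d q := by
                have hIval : ∑ i ∈ Ico k n, d i = d 0 + d q := by omega
                rw [← hNsplit, hLval, hIval, hkD]
                ring
              have heq : Even (d 0 * (d 0 + 1)) := Nat.even_mul_succ_self (d 0)
              have hcq2 : Even (d q) := by
                rw [hNval] at heven
                rcases Nat.even_add.mp heven with h
                exact h.mp heq
              obtain ⟨r, hr⟩ := hcq2
              have ee2 : d 0 * (d 0 + 1) = k * k + k := by rw [← hkD]; ring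
              omega
      omega

end Preserve

section Block
variable {d : ℕ → ℕ} {n c : ℕ}

lemma block_lt (hd : Antitone d) {i : ℕ}
    (hi : i < ((range n).filter (fun j => c ≤ d j)).card) : c ≤ d i := by
  by_contra hc
  have hsub : (range n).filter (fun j => c ≤ d j) ⊆ range i := by
    intro j hj
    simp only [mem_filter, mem_range] at hj ⊢
    by_contra hji
    push_neg at hji
    exact hc (le_trans hj.2 (hd hji))
  have := card_le_card hsub
  simp at this
  omega

lemma block_ge (hd : Antitone d) {i : ℕ}
    (hi : ((range n).filter (fun j => c ≤ d j)).card ≤ i) (hin : i < n) : d i < c := by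
  by_contra hc
  push_neg at hc
  have hsub : range (i + 1) ⊆ (range n).filter (fun j => c ≤ d j) := by
    intro j hj
    simp only [mem_range] at hj
    simp only [mem_filter, mem_range]
    exact ⟨lt_of_lt_of_le hj hin, le_trans hc (hd (by omega))⟩
  have := card_le_card hsub
  simp at this
  omega

end Block


lemma eg_graphic : ∀ (N n : ℕ) (d : ℕ → ℕ), Antitone d → (∀ i, n ≤ i → d i = 0) →
    (∑ i ∈ range n, d i = N) → Even N → (∀ k ≤ n, EG d n k) →
    ∃ (G : SimpleGraph (Fin n)) (_ : DecidableRel G.Adj), ∀ v : Fin n, G.degree v = d v.val := by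
  intro N
  induction N using Nat.strong_induction_on with
  | _ N IH =>
    intro n d hd hz hsum heven heg
    rcases Nat.eq_zero_or_pos N with rfl | hNpos
    -- base case: zero sum
    · refine ⟨⊥, fun a b => Decidable.isFalse (by simp), fun v => ?_⟩
      rw [SimpleGraph.bot_degree]
      have := (sum_eq_zero_iff).mp hsum v.val (by simp [v.isLt])
      omega
    -- main case
    · have hn1 : 1 ≤ n := by
        rcases Nat.eq_zero_or_pos n with rfl | h
        · simp at hsum; omega
        · exact h
      have hd01 : 1 ≤ d 0 := by
        by_contra hc
        push_neg at hc
        have : ∀ i ∈ range n, d i = 0 := by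
          intro i _
          have := hd (Nat.zero_le i)
          omega
        rw [sum_eq_zero this] at hsum
        omega
      set P := ((range n).filter (fun j => 1 ≤ d j)).card with hP
      set t := ((range n).filter (fun j => d 0 ≤ d j)).card with ht
      have hPn : P ≤ n := le_trans (card_filter_le _ _) (by simp)
      have ht1 : 1 ≤ t := by
        rw [ht]
        refine card_pos.2 ⟨0, ?_⟩
        simp only [mem_filter, mem_range]
        omega
      have hP2 : 2 ≤ P := by
        by_contra hc
        push_neg at hc
        have heg1 := heg 1 hn1
        unfold EG at heg1
        have hzero : ∀ i ∈ Ico 1 n, min (d i) 1 = 0 := by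
          intro i hi
          simp only [mem_Ico] at hi
          have := block_ge (n := n) (c := 1) hd (by omega) hi.2
          omega
        rw [sum_eq_zero hzero, sum_range_one] at heg1
        omega
      set q0 := P - 1 with hq0
      set p0 := min (t - 1) (P - 2) with hp0def
      have hq0n : q0 < n := by omega
      have hp0q0 : p0 < q0 := by omega
      have htop : ∀ i ≤ p0, d i = d 0 := by
        intro i hi
        have h1 : d 0 ≤ d i := block_lt (n := n) (c := d 0) hd (by omega)
        have h2 : d i ≤ d 0 := hd (Nat.zero_le i)
        omega
      have hqpos : 1 ≤ d q0 := block_lt (n := n) (c := 1) hd (by omega)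
      have htail : ∀ i, q0 < i → d i = 0 := by
        intro i hi
        rcases lt_or_ge i n with h | h
        · have := block_ge (n := n) (c := 1) hd (by omega) h
          omega
        · exact hz i h
      -- the decremented sequence
      set d' : ℕ → ℕ := fun i => if i = p0 ∨ i = q0 then d i - 1 else d i with hd'def
      have hd' : ∀ i, d' i = if i = p0 ∨ i = q0 then d i - 1 else d i := fun i => rfl
      have hppos : 1 ≤ d p0 := le_trans hqpos (hd hp0q0.le)
      have hd'anti : Antitone d' := by
        intro i j hij
        rcases eq_or_lt_of_le hij with rfl | hlt
        · exact le_rfl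
        · have hji : d j ≤ d i := hd hij
          rw [hd' i, hd' j]
          by_cases hi1 : i = p0
          · subst hi1
            by_cases hj1 : j = q0
            · have h' : d q0 ≤ d p0 := hd (le_of_lt hp0q0)
              simp [hj1]
              omega
            · by_cases hj2 : j = p0
              · omega
              · simp [hj1, hj2]
                rcases lt_or_ge j q0 with hjq | hjq
                · -- p0 < j < q0 : show d j ≤ d 0 - 1
                  have hmin : p0 = t - 1 := by omega
                  have : d j < d 0 := block_ge (n := n) (c := d 0) hd (by omega) (by omega)
                  have := htop p0 le_rfl
                  simp
                  omega
                · have : d j = 0 := htail j (by omega)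
                  simp
                  omega
          · by_cases hi2 : i = q0
            · subst hi2
              have hjz : d j = 0 := htail j hlt
              have : ¬ (j = p0 ∨ j = q0) := by omega
              simp [this, hjz]
            · simp [hi1, hi2]
              by_cases hj : j = p0 ∨ j = q0 <;> simp [hj] <;> omega
      have hz' : ∀ i, n ≤ i → d' i = 0 := by
        intro i hi
        rw [hd' i, hz i hi]
        simp
      have hsplit : ∀ i, d i = d' i + ((if i = p0 then 1 else 0) + (if i = q0 then 1 else 0)) := by
        intro i
        rw [hd' i]
        by_cases h1 : i = p0 <;> by_cases h2 : i = q0 <;>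
          simp [h1, h2, hp0q0.ne, hp0q0.ne'] <;> omega
      have hsum' : ∑ i ∈ range n, d' i = N - 2 := by
        have : ∑ i ∈ range n, d i = (∑ i ∈ range n, d' i) + 2 := by
          calc ∑ i ∈ range n, d i
              = ∑ i ∈ range n, (d' i + ((if i = p0 then 1 else 0) + (if i = q0 then 1 else 0))) :=
                sum_congr rfl (fun i _ => hsplit i)
            _ = (∑ i ∈ range n, d' i) + ((∑ i ∈ range n, if i = p0 then 1 else 0)
                  + (∑ i ∈ range n, if i = q0 then 1 else 0)) := by
                rw [sum_add_distrib, sum_add_distrib]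
            _ = (∑ i ∈ range n, d' i) + 2 := by
                rw [Finset.sum_ite_eq' (range n) p0 (fun _ => 1),
                  Finset.sum_ite_eq' (range n) q0 (fun _ => 1)]
                simp [mem_range, hq0n, lt_trans hp0q0 hq0n]
        omega
      obtain ⟨m, hm⟩ := heven
      have hN2 : 2 ≤ N := by omega
      have heven' : Even (N - 2) := ⟨m - 1, by omega⟩
      have hevensum : Even (∑ i ∈ range n, d i) := by rw [hsum]; exact ⟨m, hm⟩
      have heg' : ∀ k ≤ n, EG d' n k := fun k hk =>
        eg_preserved hd hz hp0q0 hq0n htop hqpos htail heg hevensum hd' hk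
      obtain ⟨G', inst', hdeg'⟩ := IH (N - 2) (by omega) n d' hd'anti hz' hsum' heven' heg'
      -- now the surgery
      letI : DecidableRel G'.Adj := inst'
      have hpfn : p0 < n := by omega
      set pf : Fin n := ⟨p0, hpfn⟩ with hpf
      set qf : Fin n := ⟨q0, hq0n⟩ with hqf
      have hpfval : pf.val = p0 := rfl
      have hqfval : qf.val = q0 := rfl
      have hpfqf : pf ≠ qf := by
        intro h
        have := congrArg Fin.val h
        rw [hpfval, hqfval] at this
        omega
      have hdegp : G'.degree pf = d 0 - 1 := by
        rw [hdeg' pf, hpfval, hd' p0, if_pos (Or.inl rfl), htop p0 le_rfl]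
      have hdegq : G'.degree qf = d q0 - 1 := by
        rw [hdeg' qf, hqfval, hd' q0, if_pos (Or.inr rfl)]
      have hfinal : ∀ (v : Fin n),
          (if v.val = p0 ∨ v.val = q0 then d v.val - 1 else d v.val)
            + (if v = pf ∨ v = qf then 1 else 0) = d v.val := by
        intro v
        by_cases hv1 : v.val = p0
        · have : v = pf := Fin.ext (by rw [hpfval]; exact hv1)
          rw [if_pos (Or.inl hv1), if_pos (Or.inl this), hv1]
          omega
        · by_cases hv2 : v.val = q0
          · have : v = qf := Fin.ext (by rw [hqfval]; exact hv2)
            rw [if_pos (Or.inr hv2), if_pos (Or.inr this), hv2]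
            omega
          · have h1 : ¬ (v.val = p0 ∨ v.val = q0) := by omega
            have h2 : ¬ (v = pf ∨ v = qf) := by
              rintro (rfl | rfl)
              · exact hv1 rfl
              · exact hv2 rfl
            rw [if_neg h1, if_neg h2, add_zero]
      by_cases hadj : G'.Adj pf qf
      · -- the vertices are already adjacent; find a two-switch
        have hd0q0 : d 0 ≤ q0 := by
          have heg1 := heg 1 hn1
          unfold EG at heg1
          rw [sum_range_one] at heg1
          have hsplitIco : (∑ i ∈ Ico 1 (q0+1), min (d i) 1)
              + (∑ i ∈ Ico (q0+1) n, min (d i) 1) = ∑ i ∈ Ico 1 n, min (d i) 1 :=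
            sum_Ico_consecutive _ (by omega) (by omega)
          have h1 : ∑ i ∈ Ico 1 (q0+1), min (d i) 1 ≤ q0 := by
            have h := Finset.sum_le_card_nsmul (Ico 1 (q0+1)) (fun i => min (d i) 1) 1
              (fun i _ => min_le_right _ _)
            simpa [Nat.card_Ico] using h
          have h2 : ∑ i ∈ Ico (q0+1) n, min (d i) 1 = 0 :=
            sum_eq_zero (fun i hi => by
              have hti := htail i (by simp only [mem_Ico] at hi; omega)
              simp [hti])
          omega
        -- find w with w < q0, w ≠ p0, not adjacent to pf
        have hw : ∃ w : Fin n, w.val < q0 ∧ w ≠ pf ∧ ¬ G'.Adj pf w := by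
          by_contra hc
          push_neg at hc
          have hsub : insert qf ((univ.filter (fun w : Fin n => w < qf)).erase pf)
              ⊆ G'.neighborFinset pf := by
            intro x hx
            rw [SimpleGraph.mem_neighborFinset]
            rcases mem_insert.mp hx with rfl | hx'
            · exact hadj
            · have h1 := mem_erase.mp hx'
              have h2 := (mem_filter.mp h1.2).2
              exact hc x h2 h1.1
          have hAcard : (univ.filter (fun w : Fin n => w < qf)).card = q0 := by
            have : univ.filter (fun w : Fin n => w < qf) = Iio qf := by
              ext x; simp [mem_Iio]
            rw [this, Fin.card_Iio, hqfval]
          have hpfA : pf ∈ univ.filter (fun w : Fin n => w < qf) := by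
            simp only [mem_filter, mem_univ, true_and]
            exact Fin.lt_def.mpr (by rw [hpfval, hqfval]; exact hp0q0)
          have hqfnm : qf ∉ (univ.filter (fun w : Fin n => w < qf)).erase pf := by
            simp [mem_erase]
          have hle := card_le_card hsub
          rw [card_insert_of_notMem hqfnm, card_erase_of_mem hpfA, hAcard] at hle
          have : (G'.neighborFinset pf).card = G'.degree pf := rfl
          omega
        obtain ⟨w, hw1, hw2, hw3⟩ := hw
        have hwvp : w.val ≠ p0 := fun h => hw2 (Fin.ext h)
        have hwvq : w.val ≠ q0 := Nat.ne_of_lt hw1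
        have hdegw : G'.degree w = d w.val := by
          rw [hdeg' w, hd' w.val, if_neg (not_or.mpr ⟨hwvp, hwvq⟩)]
        have hdw : d q0 ≤ d w.val := hd (le_of_lt hw1)
        -- find u adjacent to w, not adjacent to qf
        have hu : ∃ u : Fin n, G'.Adj w u ∧ ¬ G'.Adj qf u ∧ u ≠ qf := by
          by_contra hc
          push_neg at hc
          have hsub : G'.neighborFinset w ⊆ insert qf ((G'.neighborFinset qf).erase pf) := by
            intro x hx
            rw [SimpleGraph.mem_neighborFinset] at hx
            by_cases hxq : G'.Adj qf x
            · refine mem_insert_of_mem (mem_erase.2 ⟨?_, (SimpleGraph.mem_neighborFinset _ _ _).2 hxq⟩)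
              intro hxp
              subst hxp
              exact hw3 hx.symm
            · exact (hc x hx hxq) ▸ mem_insert_self _ _
          have hpfmem : pf ∈ G'.neighborFinset qf :=
            (SimpleGraph.mem_neighborFinset _ _ _).2 hadj.symm
          have hqfnm : qf ∉ (G'.neighborFinset qf).erase pf := by
            simp
          have hle := card_le_card hsub
          rw [card_insert_of_notMem hqfnm, card_erase_of_mem hpfmem] at hle
          have e1 : (G'.neighborFinset w).card = G'.degree w := rfl
          have e2 : (G'.neighborFinset qf).card = G'.degree qf := rfl
          have hq2 : 1 ≤ (G'.neighborFinset qf).card := card_pos.2 ⟨pf, hpfmem⟩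
          rw [e2, hdegq] at hq2
          rw [e1, e2, hdegw, hdegq] at hle
          omega
        obtain ⟨u, hu1, hu2, hu3⟩ := hu
        have hupf : u ≠ pf := by
          intro h
          subst h
          exact hw3 hu1.symm
        have hwu : w ≠ u := hu1.ne
        have hqw : qf ≠ w := fun h => hwvq (by rw [← h, hqfval])
        obtain ⟨G, instG, hdegG⟩ := swap_surgery G' hpfqf (Ne.symm hw2) (Ne.symm hupf)
          hqw (Ne.symm hu3) hwu hu1.symm hw3 hu2
        refine ⟨G, instG, fun v => ?_⟩
        rw [hdegG v, hdeg' v, hd' v.val]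
        exact hfinal v
      · -- not adjacent: just add the edge
        refine ⟨addE G' pf qf hpfqf, addE.instDec G' pf qf hpfqf, fun v => ?_⟩
        rw [degree_addE G' hpfqf hadj v, hdeg' v, hd' v.val]
        exact hfinal v


/-- A finite integer sequence is graphic if it is realized as the degree sequence of a
simple graph. -/
def IsGraphicSeq {n : ℕ} (d : Fin n → ℕ) : Prop :=
  ∃ (G : SimpleGraph (Fin n)) (_ : DecidableRel G.Adj), ∀ i, G.degree i = d i

/-- Zverovich–Zverovich: a nonincreasing sequence bounded above by `a` and below by
`b > 0`, with even sum and length `n ≥ (a+b+1)²/(4b)` (stated as `(a+b+1)² ≤ 4bn`),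
is graphic. -/
theorem zverovich_zverovich {a b n : ℕ} (hb : 0 < b) (hba : b ≤ a)
    (d : Fin n → ℕ) (hmono : ∀ i j : Fin n, i ≤ j → d j ≤ d i)
    (hub : ∀ i, d i ≤ a) (hlb : ∀ i, b ≤ d i)
    (heven : Even (∑ i, d i)) (hn : (a + b + 1) ^ 2 ≤ 4 * b * n) :
    IsGraphicSeq d := by
  classical
  set dx : ℕ → ℕ := fun i => if h : i < n then d ⟨i, h⟩ else 0 with hdx
  have hdxval : ∀ (i : ℕ) (h : i < n), dx i = d ⟨i, h⟩ := by
    intro i h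
    simp [hdx, h]
  have hanti : Antitone dx := by
    intro i j hij
    by_cases hj : j < n
    · have hi : i < n := lt_of_le_of_lt hij hj
      rw [hdxval i hi, hdxval j hj]
      exact hmono ⟨i, hi⟩ ⟨j, hj⟩ hij
    · simp [hdx, hj]
  have hzx : ∀ i, n ≤ i → dx i = 0 := by
    intro i hi
    simp [hdx, Nat.not_lt.mpr hi]
  have hn1 : a + 1 ≤ n := by
    have h1 : (4 : ℤ) * b * (a + 1) ≤ 4 * b * n := by
      have h2 : ((a : ℤ) + b + 1) ^ 2 ≤ 4 * b * n := by exact_mod_cast hn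
      nlinarith [sq_nonneg ((a : ℤ) - b), (by exact_mod_cast hba : (b : ℤ) ≤ a),
        (by exact_mod_cast hb : (0 : ℤ) < b)]
    have hbz : (0 : ℤ) < b := by exact_mod_cast hb
    have := le_of_mul_le_mul_left (by linarith : (b : ℤ) * (a + 1) ≤ b * n) hbz
    exact_mod_cast this
  have heg : ∀ k ≤ n, EG dx n k := by
    intro k hk
    rcases Nat.eq_zero_or_pos k with rfl | hk1
    · simp [EG]
    unfold EG
    have hL : ∑ i ∈ range k, dx i ≤ k * a := by
      have h := Finset.sum_le_card_nsmul (range k) dx a (fun i hi => by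
        have hi' : i < n := lt_of_lt_of_le (mem_range.mp hi) hk
        rw [hdxval i hi']
        exact hub _)
      simpa using h
    have hS : (n - k) * min b k ≤ ∑ i ∈ Ico k n, min (dx i) k := by
      have hc : ∑ _i ∈ Ico k n, min b k = (n - k) * min b k := by
        rw [sum_const, Nat.card_Ico, smul_eq_mul]
      rw [← hc]
      refine sum_le_sum (fun i hi => ?_)
      simp only [mem_Ico] at hi
      rw [hdxval i hi.2]
      exact min_le_min (hlb _) le_rfl
    have key : k * a ≤ k * (k - 1) + (n - k) * min b k := by
      rcases le_total k b with hkb | hkb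
      · rw [min_eq_right hkb]
        have e : k * (k - 1) + (n - k) * k = k * (n - 1) := by
          zify [hk1, hk, (by omega : 1 ≤ n)]
          ring
        rw [e]
        exact Nat.mul_le_mul_left k (by omega)
      · rw [min_eq_left hkb]
        zify [hk1, hk]
        have h2 : ((a : ℤ) + b + 1) ^ 2 ≤ 4 * b * n := by exact_mod_cast hn
        nlinarith [sq_nonneg (2 * (k : ℤ) - (a + b + 1))]
    omega
  have hsum : ∑ i ∈ range n, dx i = ∑ i, d i := by
    rw [← Fin.sum_univ_eq_sum_range]
    exact Finset.sum_congr rfl (fun i _ => by rw [hdxval i.val i.isLt])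
  obtain ⟨G, inst, hdeg⟩ := eg_graphic (∑ i, d i) n dx hanti hzx hsum heven heg
  refine ⟨G, inst, fun i => ?_⟩
  rw [hdeg i, hdxval i.val i.isLt]
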